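/- arXiv:1804.10280 — 2 statements merged into one kernel-verified Lean document; each statement's English description precedes it below -/
import Mathlib

section
/- Assume ν charges all open sets, U : C → U(H⊗H) is continuous with U(σ₀)=1 for some σ₀, Q is swap-invariant, and the collision specification is ergodic (the commutant of {U(σ)} equals the algebra generated by spectral projections of H_2). If a strictly positive density matrix ρ on finite-dimensional H satisfies ρ ⋆ ρ = ρ, then ρ commutes with h, ρ = Σ_e λ_e P_e (constant on eigenspaces of h), and whenever e_i + e_j = e_k + e_ℓ in Spec(h) one has λ_{e_i} λ_{e_j} = λ_{e_k} λ_{e_ℓ}. Conversely every such ρ satisfies ρ ⋆ ρ = ρ. -/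
open Matrix MeasureTheory
open scoped Matrix.Norms.L2Operator ComplexOrder

/-- Tensor (Kronecker) product of operators on `H = ℂ^n`, as an operator on `H ⊗ H`. -/
def tensorMat {n : ℕ} (A B : Matrix (Fin n) (Fin n) ℂ) :
    Matrix (Fin n × Fin n) (Fin n × Fin n) ℂ :=
  Matrix.of fun p q => A p.1 q.1 * B p.2 q.2

/-- Partial trace over the second tensor factor. -/
noncomputable def ptrace2 {n : ℕ} (M : Matrix (Fin n × Fin n) (Fin n × Fin n) ℂ) :
    Matrix (Fin n) (Fin n) ℂ :=
  Matrix.of fun a b => ∑ k : Fin n, M (a, k) (b, k)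

/-- The tensor swap unitary on `H ⊗ H`. -/
def swapMat {n : ℕ} : Matrix (Fin n × Fin n) (Fin n × Fin n) ℂ :=
  Matrix.of fun p q => if p.1 = q.2 ∧ p.2 = q.1 then (1 : ℂ) else 0

/-- The averaged conjugation operator `Q(X) = ∫ U(σ) X U(σ)* dν(σ)` on `B(H ⊗ H)`. -/
noncomputable def Qop {C : Type*} [MeasurableSpace C] {n : ℕ}
    (ν : Measure C) (U : C → Matrix (Fin n × Fin n) (Fin n × Fin n) ℂ)
    (X : Matrix (Fin n × Fin n) (Fin n × Fin n) ℂ) :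
    Matrix (Fin n × Fin n) (Fin n × Fin n) ℂ :=
  ∫ σ, U σ * X * (U σ)ᴴ ∂ν

/-- The quantum Wild convolution `A ⋆ B = Tr₂[Q(A ⊗ B)]`. -/
noncomputable def wildConv {C : Type*} [MeasurableSpace C] {n : ℕ}
    (ν : Measure C) (U : C → Matrix (Fin n × Fin n) (Fin n × Fin n) ℂ)
    (A B : Matrix (Fin n) (Fin n) ℂ) : Matrix (Fin n) (Fin n) ℂ :=
  ptrace2 (Qop ν U (tensorMat A B))

/-- The spectral projection of `H_2` at energy `E`, for `h = diag(e)`. -/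
noncomputable def specProj2 {n : ℕ} (e : Fin n → ℝ) (E : ℝ) :
    Matrix (Fin n × Fin n) (Fin n × Fin n) ℂ :=
  Matrix.of fun p q => if p = q ∧ e p.1 + e p.2 = E then (1 : ℂ) else 0

/-- The spectral projection of `h = diag(e)` at eigenvalue `E`. -/
noncomputable def specProj1 {n : ℕ} (e : Fin n → ℝ) (E : ℝ) :
    Matrix (Fin n) (Fin n) ℂ :=
  Matrix.of fun a b => if a = b ∧ e a = E then (1 : ℂ) else 0

section Klein
variable {ι : Type*} [Fintype ι] [DecidableEq ι]

lemma scalar_klein {a b : ℝ} (ha : 0 < a) (hb : 0 < b) :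
    0 ≤ a * Real.log a - a * Real.log b - a + b := by
  have h := Real.log_le_sub_one_of_pos (div_pos hb ha)
  rw [Real.log_div hb.ne' ha.ne'] at h
  have h2 : a * (Real.log b - Real.log a) ≤ a * (b / a - 1) :=
    mul_le_mul_of_nonneg_left h ha.le
  have h3 : a * (b / a - 1) = b - a := by field_simp
  nlinarith [h2, h3]

lemma scalar_klein_eq {a b : ℝ} (ha : 0 < a) (hb : 0 < b)
    (h : a * Real.log a - a * Real.log b - a + b = 0) : a = b := by
  by_contra hne
  have hba : b / a ≠ 1 := by
    intro h1; exact hne ((div_eq_one_iff_eq ha.ne').mp h1).symm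
  have hlt := Real.log_lt_sub_one_of_pos (div_pos hb ha) hba
  rw [Real.log_div hb.ne' ha.ne'] at hlt
  have h2 : a * (Real.log b - Real.log a) < a * (b / a - 1) :=
    mul_lt_mul_of_pos_left hlt ha
  have h3 : a * (b / a - 1) = b - a := by field_simp
  nlinarith [h2, h3]

lemma unitary_row_sum (G : Matrix ι ι ℂ) (hG : G ∈ Matrix.unitaryGroup ι ℂ) (p : ι) :
    ∑ q, ‖G p q‖ ^ 2 = 1 := by
  have h := Matrix.mem_unitaryGroup_iff.mp hG
  have h1 : (G * Gᴴ) p p = 1 := by rw [Matrix.star_eq_conjTranspose] at h; rw [h, Matrix.one_apply_eq]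
  rw [Matrix.mul_apply] at h1
  have h2 : ∀ q, G p q * Gᴴ q p = ((‖G p q‖ ^ 2 : ℝ) : ℂ) := by
    intro q
    rw [Matrix.conjTranspose_apply, RCLike.star_def, Complex.mul_conj]
    norm_cast
    exact Complex.normSq_eq_norm_sq _
  rw [Finset.sum_congr rfl (fun q _ => h2 q)] at h1
  exact_mod_cast h1

lemma unitary_col_sum (G : Matrix ι ι ℂ) (hG : G ∈ Matrix.unitaryGroup ι ℂ) (q : ι) :
    ∑ p, ‖G p q‖ ^ 2 = 1 := by
  have h := unitary_row_sum Gᴴ (by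
    rw [← Matrix.star_eq_conjTranspose]; exact Unitary.star_mem hG) q
  simpa [Matrix.conjTranspose_apply] using h
end Klein
section Klein2
variable {ι : Type*} [Fintype ι] [DecidableEq ι]

lemma klein_expand (G : Matrix ι ι ℂ) (hG : G ∈ Matrix.unitaryGroup ι ℂ) (μ : ι → ℝ) :
    (∑ p, μ p * Real.log (μ p)) - ∑ p, ∑ q, ‖G p q‖ ^ 2 * (μ p * Real.log (μ q))
      = ∑ p, ∑ q, ‖G p q‖ ^ 2 *
          (μ p * Real.log (μ p) - μ p * Real.log (μ q) - μ p + μ q) := by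
  have hrow := unitary_row_sum G hG
  have hcol := unitary_col_sum G hG
  have e1 : ∑ p, ∑ q, ‖G p q‖ ^ 2 * (μ p * Real.log (μ p)) = ∑ p, μ p * Real.log (μ p) := by
    refine Finset.sum_congr rfl fun p _ => ?_
    rw [← Finset.sum_mul, hrow p, one_mul]
  have e2 : ∑ p, ∑ q, ‖G p q‖ ^ 2 * μ p = ∑ p, μ p := by
    refine Finset.sum_congr rfl fun p _ => ?_
    rw [← Finset.sum_mul, hrow p, one_mul]
  have e3 : ∑ p, ∑ q, ‖G p q‖ ^ 2 * μ q = ∑ p, μ p := by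
    rw [Finset.sum_comm]
    refine Finset.sum_congr rfl fun q _ => ?_
    rw [← Finset.sum_mul, hcol q, one_mul]
  have expand : ∑ p, ∑ q, ‖G p q‖ ^ 2 *
      (μ p * Real.log (μ p) - μ p * Real.log (μ q) - μ p + μ q)
      = (∑ p, ∑ q, ‖G p q‖ ^ 2 * (μ p * Real.log (μ p)))
        - (∑ p, ∑ q, ‖G p q‖ ^ 2 * (μ p * Real.log (μ q)))
        - (∑ p, ∑ q, ‖G p q‖ ^ 2 * μ p)
        + (∑ p, ∑ q, ‖G p q‖ ^ 2 * μ q) := by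
    simp only [mul_sub, mul_add, Finset.sum_sub_distrib, Finset.sum_add_distrib]
  rw [expand, e1, e2, e3]; ring

lemma klein_nonneg (G : Matrix ι ι ℂ) (hG : G ∈ Matrix.unitaryGroup ι ℂ)
    (μ : ι → ℝ) (hμ : ∀ p, 0 < μ p) :
    0 ≤ (∑ p, μ p * Real.log (μ p)) - ∑ p, ∑ q, ‖G p q‖ ^ 2 * (μ p * Real.log (μ q)) := by
  rw [klein_expand G hG μ]
  refine Finset.sum_nonneg fun p _ => Finset.sum_nonneg fun q _ => ?_
  exact mul_nonneg (by positivity) (scalar_klein (hμ p) (hμ q))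

lemma klein_eq (G : Matrix ι ι ℂ) (hG : G ∈ Matrix.unitaryGroup ι ℂ)
    (μ : ι → ℝ) (hμ : ∀ p, 0 < μ p)
    (h : (∑ p, μ p * Real.log (μ p)) - ∑ p, ∑ q, ‖G p q‖ ^ 2 * (μ p * Real.log (μ q)) = 0)
    {p q : ι} (hpq : G p q ≠ 0) : μ p = μ q := by
  rw [klein_expand G hG μ] at h
  have hterm : ∀ r ∈ Finset.univ, (0:ℝ) ≤ ∑ s, ‖G r s‖ ^ 2 *
      (μ r * Real.log (μ r) - μ r * Real.log (μ s) - μ r + μ s) := by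
    intro r _
    exact Finset.sum_nonneg fun s _ => mul_nonneg (by positivity) (scalar_klein (hμ r) (hμ s))
  have h1 := (Finset.sum_eq_zero_iff_of_nonneg hterm).mp h p (Finset.mem_univ p)
  have hterm2 : ∀ s ∈ Finset.univ, (0:ℝ) ≤ ‖G p s‖ ^ 2 *
      (μ p * Real.log (μ p) - μ p * Real.log (μ s) - μ p + μ s) :=
    fun s _ => mul_nonneg (by positivity) (scalar_klein (hμ p) (hμ s))
  have h2 := (Finset.sum_eq_zero_iff_of_nonneg hterm2).mp h1 q (Finset.mem_univ q)
  have hn : ‖G p q‖ ^ 2 ≠ 0 := pow_ne_zero 2 (norm_ne_zero_iff.mpr hpq)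
  exact scalar_klein_eq (hμ p) (hμ q) ((mul_eq_zero.mp h2).resolve_left hn)
end Klein2

section TensorLemmas
variable {n : ℕ}

lemma tensorMat_apply (A B : Matrix (Fin n) (Fin n) ℂ) (p q : Fin n × Fin n) :
    tensorMat A B p q = A p.1 q.1 * B p.2 q.2 := rfl

lemma tensorMat_mul (A B C D : Matrix (Fin n) (Fin n) ℂ) :
    tensorMat A C * tensorMat B D = tensorMat (A * B) (C * D) := by
  ext p q
  rw [Matrix.mul_apply, tensorMat_apply, Matrix.mul_apply, Matrix.mul_apply,
    Finset.sum_mul_sum]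
  rw [← Finset.sum_product', Finset.univ_product_univ]
  refine Finset.sum_congr rfl fun r _ => ?_
  rw [tensorMat_apply, tensorMat_apply]; ring

lemma tensorMat_conjTranspose (A B : Matrix (Fin n) (Fin n) ℂ) :
    (tensorMat A B)ᴴ = tensorMat Aᴴ Bᴴ := by
  ext p q
  simp [tensorMat_apply, Matrix.conjTranspose_apply]

lemma tensorMat_diagonal (d d' : Fin n → ℂ) :
    tensorMat (Matrix.diagonal d) (Matrix.diagonal d')
      = Matrix.diagonal (fun p : Fin n × Fin n => d p.1 * d' p.2) := by
  ext p q
  by_cases h : p = q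
  · subst h; simp [tensorMat_apply, Matrix.diagonal_apply_eq]
  · rw [Matrix.diagonal_apply_ne _ h, tensorMat_apply]
    rcases (Prod.ext_iff.not.mp h) with h1
    push_neg at h1
    by_cases h2 : p.1 = q.1
    · rw [Matrix.diagonal_apply_ne _ (h1 h2), mul_zero]
    · rw [Matrix.diagonal_apply_ne _ h2, zero_mul]

lemma tensorMat_one : tensorMat (1 : Matrix (Fin n) (Fin n) ℂ) 1 = 1 := by
  rw [← Matrix.diagonal_one, tensorMat_diagonal]
  simp

lemma tensorMat_add_add (A B C D : Matrix (Fin n) (Fin n) ℂ) :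
    tensorMat (A + B) (C + D)
      = tensorMat A C + tensorMat A D + tensorMat B C + tensorMat B D := by
  ext p q
  simp [tensorMat_apply]; ring

lemma ptrace2_tensorMat (A B : Matrix (Fin n) (Fin n) ℂ) :
    ptrace2 (tensorMat A B) = B.trace • A := by
  ext a b
  simp [ptrace2, tensorMat_apply, Matrix.trace, Matrix.diag, mul_comm, Finset.mul_sum]

lemma swap_conj_apply (M : Matrix (Fin n × Fin n) (Fin n × Fin n) ℂ) (p q : Fin n × Fin n) :
    (swapMat * M * swapMatᴴ : Matrix (Fin n × Fin n) (Fin n × Fin n) ℂ) p q = M (p.2, p.1) (q.2, q.1) := by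
  rw [Matrix.mul_apply]
  have h1 : ∀ r, (swapMat * M : Matrix (Fin n × Fin n) (Fin n × Fin n) ℂ) p r = M (p.2, p.1) r := by
    intro r
    rw [Matrix.mul_apply]
    rw [Finset.sum_eq_single (p.2, p.1)]
    · simp [swapMat]
    · intro b _ hb
      have : ¬(p.1 = b.2 ∧ p.2 = b.1) := by
        intro ⟨h1, h2⟩; exact hb (by cases b; simp_all)
      simp [swapMat, this]
    · simp
  simp only [h1]
  rw [Finset.sum_eq_single (q.2, q.1)]
  · simp [swapMat, Matrix.conjTranspose_apply]
  · intro b _ hb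
    have : ¬(q.1 = b.2 ∧ q.2 = b.1) := by
      intro ⟨h1, h2⟩; exact hb (by cases b; simp_all)
    simp [swapMat, Matrix.conjTranspose_apply, this]
  · simp

lemma swap_tensorMat (A B : Matrix (Fin n) (Fin n) ℂ) :
    swapMat (n := n) * tensorMat A B * swapMatᴴ = tensorMat B A := by
  ext p q
  rw [swap_conj_apply, tensorMat_apply, tensorMat_apply]; ring

end TensorLemmas

section TraceLemmas
variable {n : ℕ}

lemma trace_mul_tensor_one (M : Matrix (Fin n × Fin n) (Fin n × Fin n) ℂ)
    (T : Matrix (Fin n) (Fin n) ℂ) :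
    (M * tensorMat T 1).trace = (ptrace2 M * T).trace := by
  have h1 : ∀ p : Fin n × Fin n, (M * tensorMat T 1) p p
      = ∑ b : Fin n, M p (b, p.2) * T b p.1 := by
    intro p
    rw [Matrix.mul_apply, Fintype.sum_prod_type]
    refine Finset.sum_congr rfl fun b _ => ?_
    have h2 : ∀ k : Fin n, M p (b, k) * tensorMat T 1 (b, k) p
        = if k = p.2 then M p (b, k) * T b p.1 else 0 := by
      intro k
      rw [tensorMat_apply, Matrix.one_apply]
      by_cases h : k = p.2 <;> simp [h] <;> ring
    rw [Finset.sum_congr rfl fun k _ => h2 k, Finset.sum_ite_eq' Finset.univ p.2]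
    simp
  have h3 : ∀ a : Fin n, (ptrace2 M * T) a a
      = ∑ b : Fin n, ∑ k : Fin n, M (a, k) (b, k) * T b a := by
    intro a
    rw [Matrix.mul_apply]
    refine Finset.sum_congr rfl fun b _ => ?_
    simp [ptrace2, Finset.sum_mul]
  rw [Matrix.trace, Matrix.trace]
  simp only [Matrix.diag_apply, h1, h3]
  rw [Fintype.sum_prod_type]
  refine Finset.sum_congr rfl fun a _ => ?_
  rw [Finset.sum_comm]

lemma trace_mul_one_tensor (M : Matrix (Fin n × Fin n) (Fin n × Fin n) ℂ)
    (T : Matrix (Fin n) (Fin n) ℂ) :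
    (M * tensorMat 1 T).trace = (ptrace2 (swapMat * M * swapMatᴴ) * T).trace := by
  have h1 : ∀ p : Fin n × Fin n, (M * tensorMat 1 T) p p
      = ∑ l : Fin n, M p (p.1, l) * T l p.2 := by
    intro p
    rw [Matrix.mul_apply, Fintype.sum_prod_type]
    have h2 : ∀ b l, M p (b, l) * tensorMat 1 T (b, l) p
        = if b = p.1 then M p (b, l) * T l p.2 else 0 := by
      intro b l
      rw [tensorMat_apply, Matrix.one_apply]
      by_cases h : b = p.1 <;> simp [h] <;> ring
    simp only [h2]
    rw [Finset.sum_comm]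
    refine Finset.sum_congr rfl fun l _ => ?_
    rw [Finset.sum_ite_eq' Finset.univ p.1]
    simp
  have h3 : ∀ c : Fin n, (ptrace2 (swapMat * M * swapMatᴴ) * T :
        Matrix (Fin n) (Fin n) ℂ) c c
      = ∑ d : Fin n, ∑ k : Fin n, M (k, c) (k, d) * T d c := by
    intro c
    rw [Matrix.mul_apply]
    refine Finset.sum_congr rfl fun d _ => ?_
    simp [ptrace2, Finset.sum_mul, swap_conj_apply]
  rw [Matrix.trace, Matrix.trace]
  simp only [Matrix.diag_apply, h1, h3]
  rw [Fintype.sum_prod_type, Finset.sum_comm]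
  refine Finset.sum_congr rfl fun k _ => ?_
  rw [Finset.sum_comm]

lemma trace_diag_conj {ι : Type*} [Fintype ι] [DecidableEq ι] (d d' : ι → ℂ)
    (G : Matrix ι ι ℂ) :
    (Matrix.diagonal d * G * Matrix.diagonal d' * Gᴴ).trace
      = ∑ p, ∑ q, d p * d' q * (G p q * star (G p q)) := by
  have hA : ∀ p q, (Matrix.diagonal d * G * Matrix.diagonal d') p q
      = d p * G p q * d' q := by
    intro p q
    rw [Matrix.mul_diagonal, Matrix.diagonal_mul]
  rw [Matrix.trace]
  simp only [Matrix.diag_apply, Matrix.mul_apply, hA, Matrix.conjTranspose_apply]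
  refine Finset.sum_congr rfl fun p _ => Finset.sum_congr rfl fun q _ => ?_
  ring

end TraceLemmas
section Analysis
variable {ι : Type*} [Fintype ι] [DecidableEq ι]

lemma mul_star_self_norm (z : ℂ) : z * star z = ((‖z‖ ^ 2 : ℝ) : ℂ) := by
  rw [RCLike.star_def, Complex.mul_conj]
  norm_cast
  rw [Complex.normSq_eq_norm_sq]

noncomputable def entryLM (p q : ι) : Matrix ι ι ℂ →ₗ[ℂ] ℂ where
  toFun A := A p q
  map_add' := by intros; rfl
  map_smul' := by intros; rfl

lemma continuous_entry (p q : ι) : Continuous fun A : Matrix ι ι ℂ => A p q :=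
  (entryLM p q).continuous_of_finiteDimensional

noncomputable def ctLM : Matrix ι ι ℂ →ₗ[ℝ] Matrix ι ι ℂ where
  toFun A := Aᴴ
  map_add' A B := Matrix.conjTranspose_add A B
  map_smul' r A := by
    ext i j
    simp [Matrix.conjTranspose_apply, star_smul]

lemma continuous_conjTranspose' : Continuous fun A : Matrix ι ι ℂ => Aᴴ :=
  (ctLM (ι := ι)).continuous_of_finiteDimensional

noncomputable def traceMulLM (L : Matrix ι ι ℂ) : Matrix ι ι ℂ →ₗ[ℂ] ℂ where
  toFun N := (N * L).trace
  map_add' A B := by simp only [add_mul, Matrix.trace_add]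
  map_smul' c A := by simp only [smul_mul_assoc, Matrix.trace_smul]; rfl

end Analysis

section SumProj
variable {n : ℕ}

lemma sum_specProj1_apply (e : Fin n → ℝ) (lam : ℝ → ℂ) (a b : Fin n) :
    (∑ E ∈ Finset.univ.image e, lam E • specProj1 e E) a b
      = if a = b then lam (e a) else 0 := by
  classical
  rw [Matrix.sum_apply]
  have h : ∀ E ∈ Finset.univ.image e, (lam E • specProj1 e E) a b
      = if e a = E then (if a = b then lam E else 0) else 0 := by
    intro E _
    rw [Matrix.smul_apply]
    unfold specProj1
    by_cases h1 : a = b <;> by_cases h2 : e a = E <;>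
      simp [h1, h2, Matrix.of_apply, smul_eq_mul]
  rw [Finset.sum_congr rfl h, Finset.sum_ite_eq (Finset.univ.image e) (e a)]
  simp

lemma sum_specProj2_apply (e : Fin n → ℝ) (c : ℝ → ℂ) (p q : Fin n × Fin n) :
    (∑ E ∈ Finset.univ.image (fun r : Fin n × Fin n => e r.1 + e r.2),
        c E • specProj2 e E) p q
      = if p = q then c (e p.1 + e p.2) else 0 := by
  classical
  rw [Matrix.sum_apply]
  have h : ∀ E ∈ Finset.univ.image (fun r : Fin n × Fin n => e r.1 + e r.2),
      (c E • specProj2 e E) p q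
      = if e p.1 + e p.2 = E then (if p = q then c E else 0) else 0 := by
    intro E _
    rw [Matrix.smul_apply]
    unfold specProj2
    by_cases h1 : p = q <;> by_cases h2 : e p.1 + e p.2 = E <;>
      simp [h1, h2, Matrix.of_apply, smul_eq_mul]
  rw [Finset.sum_congr rfl h,
    Finset.sum_ite_eq (Finset.univ.image (fun r : Fin n × Fin n => e r.1 + e r.2))
      (e p.1 + e p.2)]
  simp [Finset.mem_image]

end SumProj


/-- **Characterization of the steady states of the quantum Kac–Boltzmann equation**:
for an ergodic collision specification, a strictly positive density matrix `ρ` satisfies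
`ρ ⋆ ρ = ρ` if and only if `ρ = ∑_e λ_e P_e` is constant on the eigenspaces of `h`
(hence commutes with `h`) and `λ` is multiplicative over energy-conserving collisions:
`e_i + e_j = e_k + e_ℓ ⟹ λ_{e_i} λ_{e_j} = λ_{e_k} λ_{e_ℓ}`. -/
theorem steady_states_QKBE {C : Type*} [MetricSpace C] [CompactSpace C]
    [MeasurableSpace C] [BorelSpace C] {n : ℕ}
    (ν : Measure C) [IsProbabilityMeasure ν]
    (hν : ∀ O : Set C, IsOpen O → O.Nonempty → 0 < ν O)
    (U : C → Matrix (Fin n × Fin n) (Fin n × Fin n) ℂ)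
    (hUcont : Continuous U)
    (hUunit : ∀ σ, U σ ∈ Matrix.unitaryGroup (Fin n × Fin n) ℂ)
    (σ₀ : C) (hσ₀ : U σ₀ = 1)
    (hswap : ∀ X : Matrix (Fin n × Fin n) (Fin n × Fin n) ℂ,
      Qop ν U (swapMat * X * swapMatᴴ) = swapMat * Qop ν U X * swapMatᴴ)
    (e : Fin n → ℝ)
    (hergodic : ∀ A : Matrix (Fin n × Fin n) (Fin n × Fin n) ℂ,
      (∀ σ, Commute (U σ) A) ↔
        ∃ c : ℝ → ℂ,
          A = ∑ E ∈ Finset.univ.image (fun p : Fin n × Fin n => e p.1 + e p.2),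
                c E • specProj2 e E)
    (ρ : Matrix (Fin n) (Fin n) ℂ) (hρpos : ρ.PosDef) (hρtr : ρ.trace = 1) :
    wildConv ν U ρ ρ = ρ ↔
      ∃ lam : ℝ → ℂ,
        ρ = ∑ E ∈ Finset.univ.image e, lam E • specProj1 e E ∧
        Commute ρ (Matrix.diagonal fun i => (e i : ℂ)) ∧
        ∀ i j k l : Fin n, e i + e j = e k + e l →
          lam (e i) * lam (e j) = lam (e k) * lam (e l) := by
  classical
  have hρjj : ∀ j, ρ j j ≠ 0 := by
    intro j
    have hx : (Pi.single j 1 : Fin n → ℂ) ≠ 0 := by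
      intro h; have := congrFun h j; simp at this
    have hpos := hρpos.dotProduct_mulVec_pos hx
    have hval : dotProduct (star (Pi.single j 1 : Fin n → ℂ))
        (ρ *ᵥ Pi.single j 1) = ρ j j := by
      simp [dotProduct, Matrix.mulVec, Pi.single_apply, mul_ite,
        Finset.sum_ite_eq, Finset.sum_ite_eq']
    rw [hval] at hpos
    exact hpos.ne'
  constructor
  · -- forward direction
    intro hfix
    have hH : ρ.IsHermitian := hρpos.1
    set W : Matrix (Fin n) (Fin n) ℂ :=
      (Matrix.IsHermitian.eigenvectorUnitary hH : Matrix (Fin n) (Fin n) ℂ) with hWdef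
    set b : Fin n → ℝ := hH.eigenvalues with hbdef
    have hb : ∀ i, 0 < b i := fun i => hρpos.eigenvalues_pos i
    have hWmem : W ∈ Matrix.unitaryGroup (Fin n) ℂ :=
      (Matrix.IsHermitian.eigenvectorUnitary hH).2
    have hWW : W * Wᴴ = 1 := by
      have := Matrix.mem_unitaryGroup_iff.mp hWmem
      rwa [Matrix.star_eq_conjTranspose] at this
    have hWW' : Wᴴ * W = 1 := by
      have := Matrix.mem_unitaryGroup_iff'.mp hWmem
      rwa [Matrix.star_eq_conjTranspose] at this
    have hspec : ρ = W * Matrix.diagonal (fun i => (b i : ℂ)) * Wᴴ := by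
      have h := hH.spectral_theorem
      rw [Unitary.conjStarAlgAut_apply, Matrix.star_eq_conjTranspose] at h
      exact h
    set μ : Fin n × Fin n → ℝ := fun p => b p.1 * b p.2 with hμdef
    have hμ : ∀ p, 0 < μ p := fun p => mul_pos (hb _) (hb _)
    set V := tensorMat W W with hVdef
    have hVct : Vᴴ = tensorMat Wᴴ Wᴴ := tensorMat_conjTranspose W W
    have hVV : V * Vᴴ = 1 := by rw [hVct, hVdef, tensorMat_mul, hWW, tensorMat_one]
    have hVV' : Vᴴ * V = 1 := by rw [hVct, hVdef, tensorMat_mul, hWW', tensorMat_one]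
    have hVmem : V ∈ Matrix.unitaryGroup (Fin n × Fin n) ℂ := by
      rw [Matrix.mem_unitaryGroup_iff, Matrix.star_eq_conjTranspose]; exact hVV
    set Dμ := Matrix.diagonal (fun p : Fin n × Fin n => ((μ p : ℝ) : ℂ)) with hDμdef
    have hYV : tensorMat ρ ρ = V * Dμ * Vᴴ := by
      conv_lhs => rw [hspec]
      rw [← tensorMat_mul, ← tensorMat_mul, tensorMat_diagonal, ← hVct]
      have hfun : (fun p : Fin n × Fin n => (b p.1 : ℂ) * (b p.2 : ℂ))
          = fun p : Fin n × Fin n => ((μ p : ℝ) : ℂ) := by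
        funext p
        rw [hμdef]
        push_cast
        ring
      rw [hfun]
    set Dlog := Matrix.diagonal (fun p : Fin n × Fin n => ((Real.log (μ p) : ℝ) : ℂ)) with hDlogdef
    set L := V * Dlog * Vᴴ with hLdef
    set T := W * Matrix.diagonal (fun i => ((Real.log (b i) : ℝ) : ℂ)) * Wᴴ with hTdef
    have hone : (1 : Matrix (Fin n) (Fin n) ℂ) = W * 1 * Wᴴ := by rw [mul_one, hWW]
    have hL1 : tensorMat T 1
        = V * Matrix.diagonal (fun p : Fin n × Fin n => ((Real.log (b p.1) : ℝ) : ℂ)) * Vᴴ := by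
      conv_lhs => rw [hTdef, hone]
      rw [← tensorMat_mul, ← tensorMat_mul, ← hVct, ← Matrix.diagonal_one (n := Fin n) (α := ℂ),
        tensorMat_diagonal]
      have hfun : (fun p : Fin n × Fin n => ((Real.log (b p.1) : ℝ) : ℂ) * 1)
          = fun p : Fin n × Fin n => ((Real.log (b p.1) : ℝ) : ℂ) := by
        funext p
        rw [mul_one]
      rw [hfun]
    have hL2 : tensorMat 1 T
        = V * Matrix.diagonal (fun p : Fin n × Fin n => ((Real.log (b p.2) : ℝ) : ℂ)) * Vᴴ := by
      conv_lhs => rw [hTdef, hone]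
      rw [← tensorMat_mul, ← tensorMat_mul, ← hVct, ← Matrix.diagonal_one (n := Fin n) (α := ℂ),
        tensorMat_diagonal]
      have hfun : (fun p : Fin n × Fin n => (1 : ℂ) * ((Real.log (b p.2) : ℝ) : ℂ))
          = fun p : Fin n × Fin n => ((Real.log (b p.2) : ℝ) : ℂ) := by
        funext p
        rw [one_mul]
      rw [hfun]
    have hLsum : L = tensorMat T 1 + tensorMat 1 T := by
      have hfun2 : (fun p : Fin n × Fin n => ((Real.log (μ p) : ℝ) : ℂ))
          = (fun p : Fin n × Fin n => ((Real.log (b p.1) : ℝ) : ℂ))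
            + (fun p : Fin n × Fin n => ((Real.log (b p.2) : ℝ) : ℂ)) := by
        funext p
        rw [hμdef]
        simp only [Pi.add_apply]
        rw [Real.log_mul (hb p.1).ne' (hb p.2).ne']
        push_cast
        ring
      rw [hL1, hL2, ← add_mul, ← mul_add, Matrix.diagonal_add, hLdef, hDlogdef, hfun2]
      rfl
    set M := Qop ν U (tensorMat ρ ρ) with hMdef
    have hM2 : ptrace2 M = ρ := hfix
    have hMsw : swapMat * M * swapMatᴴ = M := by
      have h := hswap (tensorMat ρ ρ)
      rw [swap_tensorMat] at h
      exact h.symm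
    have hM1 : ptrace2 (swapMat * M * swapMatᴴ) = ρ := by rw [hMsw]; exact hM2
    -- trace of ρ and b sums
    have htrρb : ρ.trace = ∑ i, ((b i : ℝ) : ℂ) := by
      conv_lhs => rw [hspec]
      rw [Matrix.trace_mul_comm, ← Matrix.mul_assoc, hWW', one_mul, Matrix.trace_diagonal]
    have hsumb : ∑ i, b i = 1 := by
      have h : ((∑ i, b i : ℝ) : ℂ) = 1 := by
        rw [Complex.ofReal_sum, ← htrρb]; exact hρtr
      exact_mod_cast h
    have hρT : (ρ * T).trace = ((∑ i, b i * Real.log (b i) : ℝ) : ℂ) := by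
      conv_lhs => rw [hspec, hTdef]
      have h4 : Wᴴ * (W * (Matrix.diagonal (fun i => ((Real.log (b i) : ℝ) : ℂ)) * Wᴴ))
          = Matrix.diagonal (fun i => ((Real.log (b i) : ℝ) : ℂ)) * Wᴴ := by
        rw [← Matrix.mul_assoc, ← Matrix.mul_assoc, hWW', one_mul]
      have e1 : W * Matrix.diagonal (fun i => (b i : ℂ)) * Wᴴ
            * (W * Matrix.diagonal (fun i => ((Real.log (b i) : ℝ) : ℂ)) * Wᴴ)
          = W * (Matrix.diagonal (fun i => (b i : ℂ))
            * Matrix.diagonal (fun i => ((Real.log (b i) : ℝ) : ℂ))) * Wᴴ := by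
        simp only [Matrix.mul_assoc, h4]
      rw [e1, Matrix.trace_mul_comm, ← Matrix.mul_assoc, hWW', one_mul,
        Matrix.diagonal_mul_diagonal, Matrix.trace_diagonal]
      push_cast
      rfl
    have hc₀ : ∑ p : Fin n × Fin n, μ p * Real.log (μ p)
        = 2 * ∑ i, b i * Real.log (b i) := by
      have h1 : ∀ p : Fin n × Fin n, μ p * Real.log (μ p)
          = b p.1 * Real.log (b p.1) * b p.2 + b p.1 * (b p.2 * Real.log (b p.2)) := by
        intro p
        rw [hμdef]
        simp only
        rw [Real.log_mul (hb p.1).ne' (hb p.2).ne']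
        ring
      rw [Finset.sum_congr rfl fun p _ => h1 p, Fintype.sum_prod_type]
      have h2 : ∀ i, ∑ j, (b i * Real.log (b i) * b j + b i * (b j * Real.log (b j)))
          = b i * Real.log (b i) + b i * (∑ j, b j * Real.log (b j)) := by
        intro i
        rw [Finset.sum_add_distrib, ← Finset.mul_sum, ← Finset.mul_sum, hsumb, mul_one]
      rw [Finset.sum_congr rfl fun i _ => h2 i, Finset.sum_add_distrib, ← Finset.sum_mul,
        hsumb, one_mul]
      ring
    have hMLtr : (M * L).trace = ((∑ p : Fin n × Fin n, μ p * Real.log (μ p) : ℝ) : ℂ) := by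
      rw [hLsum, mul_add, Matrix.trace_add, trace_mul_tensor_one, trace_mul_one_tensor,
        hM2, hM1, hρT, hc₀]
      push_cast
      ring
    set G : C → Matrix (Fin n × Fin n) (Fin n × Fin n) ℂ := fun σ => (U σ * V)ᴴ * V with hGdef
    have hGmem : ∀ σ, G σ ∈ Matrix.unitaryGroup (Fin n × Fin n) ℂ := by
      intro σ
      refine mul_mem ?_ hVmem
      rw [← Matrix.star_eq_conjTranspose]
      exact Unitary.star_mem (mul_mem (hUunit σ) hVmem)
    have htrσ : ∀ σ, (U σ * tensorMat ρ ρ * (U σ)ᴴ * L).trace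
        = ((∑ p, ∑ q, ‖G σ p q‖ ^ 2 * (μ p * Real.log (μ q)) : ℝ) : ℂ) := by
      intro σ
      have e1 : U σ * tensorMat ρ ρ * (U σ)ᴴ * L
          = (U σ * V) * (Dμ * ((U σ * V)ᴴ * (V * Dlog * Vᴴ))) := by
        rw [hYV, hLdef]
        simp only [Matrix.conjTranspose_mul, Matrix.mul_assoc]
      rw [e1, Matrix.trace_mul_comm]
      have e2 : Dμ * ((U σ * V)ᴴ * (V * Dlog * Vᴴ)) * (U σ * V)
          = Dμ * G σ * Dlog * (G σ)ᴴ := by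
        rw [hGdef]
        simp only [Matrix.conjTranspose_mul, Matrix.conjTranspose_conjTranspose,
          Matrix.mul_assoc]
      rw [e2, hDμdef, hDlogdef, trace_diag_conj]
      push_cast
      refine Finset.sum_congr rfl fun p _ => Finset.sum_congr rfl fun q _ => ?_
      rw [mul_star_self_norm]
      push_cast
      ring
    set F : C → ℝ := fun σ => (∑ p : Fin n × Fin n, μ p * Real.log (μ p))
      - ∑ p, ∑ q, ‖G σ p q‖ ^ 2 * (μ p * Real.log (μ q)) with hFdef
    have hFnonneg : ∀ σ, 0 ≤ F σ := fun σ => klein_nonneg _ (hGmem σ) μ hμ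
    have hGcont : Continuous G := by
      rw [hGdef]
      exact (continuous_conjTranspose'.comp (hUcont.mul continuous_const)).mul continuous_const
    have hgcont : Continuous fun σ => ∑ p, ∑ q, ‖G σ p q‖ ^ 2 * (μ p * Real.log (μ q)) := by
      refine continuous_finset_sum _ fun p _ => continuous_finset_sum _ fun q _ => ?_
      exact (((continuous_entry p q).comp hGcont).norm.pow 2).mul continuous_const
    have hFcont : Continuous F := continuous_const.sub hgcont
    have hFint : Integrable F ν :=
      hFcont.integrable_of_hasCompactSupport (HasCompactSupport.of_compactSpace F)
    have hgint : Integrable (fun σ => ∑ p, ∑ q, ‖G σ p q‖ ^ 2 * (μ p * Real.log (μ q))) ν :=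
      hgcont.integrable_of_hasCompactSupport (HasCompactSupport.of_compactSpace _)
    have hXcont : Continuous fun σ => U σ * tensorMat ρ ρ * (U σ)ᴴ :=
      (hUcont.mul continuous_const).mul (continuous_conjTranspose'.comp hUcont)
    have hXint : Integrable (fun σ => U σ * tensorMat ρ ρ * (U σ)ᴴ) ν :=
      hXcont.integrable_of_hasCompactSupport (HasCompactSupport.of_compactSpace _)
    have hswapint : (M * L).trace
        = ∫ σ, (U σ * tensorMat ρ ρ * (U σ)ᴴ * L).trace ∂ν := by
      have h := ((traceMulLM L).toContinuousLinearMap).integral_comp_comm hXint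
      have h2 : ∀ N : Matrix (Fin n × Fin n) (Fin n × Fin n) ℂ,
          ((traceMulLM L).toContinuousLinearMap) N = (N * L).trace := fun _ => rfl
      simp only [h2] at h
      rw [hMdef]
      exact h.symm
    have hIg : ∫ σ, (∑ p, ∑ q, ‖G σ p q‖ ^ 2 * (μ p * Real.log (μ q))) ∂ν
        = ∑ p : Fin n × Fin n, μ p * Real.log (μ p) := by
      have h1 : (M * L).trace
          = ((∫ σ, (∑ p, ∑ q, ‖G σ p q‖ ^ 2 * (μ p * Real.log (μ q))) ∂ν : ℝ) : ℂ) := by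
        rw [hswapint]
        simp only [htrσ]
        exact integral_ofReal
      rw [hMLtr] at h1
      exact (Complex.ofReal_inj.mp h1).symm
    have hIF : ∫ σ, F σ ∂ν = 0 := by
      rw [hFdef]
      simp only
      rw [integral_sub (integrable_const _) hgint, integral_const, hIg]
      simp
    have hF0 : ∀ σ, F σ = 0 := by
      by_contra hcon
      push_neg at hcon
      obtain ⟨σ₁, hσ₁⟩ := hcon
      have hsupO : IsOpen (Function.support F) := by
        have hse : Function.support F = F ⁻¹' {0}ᶜ := by
          ext x; simp [Function.support]
        rw [hse]
        exact isOpen_compl_singleton.preimage hFcont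
      have hne : (Function.support F).Nonempty := ⟨σ₁, hσ₁⟩
      have hposν := hν _ hsupO hne
      have := (integral_pos_iff_support_of_nonneg hFnonneg hFint).mpr hposν
      rw [hIF] at this
      exact lt_irrefl 0 this
    have hcommY : ∀ σ, Commute (U σ) (tensorMat ρ ρ) := by
      intro σ
      have hkl : ∀ p q, G σ p q ≠ 0 → μ p = μ q :=
        fun p q hpq => klein_eq (G σ) (hGmem σ) μ hμ (hF0 σ) hpq
      have hGD : G σ * Dμ = Dμ * G σ := by
        ext p q
        rw [hDμdef, Matrix.mul_diagonal, Matrix.diagonal_mul]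
        by_cases hz : G σ p q = 0
        · rw [hz]; ring
        · rw [hkl p q hz]; ring
      have hKD : (Vᴴ * ((U σ)ᴴ * V)) * Dμ = Dμ * (Vᴴ * ((U σ)ᴴ * V)) := by
        have h := hGD
        rw [hGdef] at h
        simp only [Matrix.conjTranspose_mul, Matrix.mul_assoc] at h ⊢
        exact h
      have h1 : (U σ)ᴴ * (V * Dμ * Vᴴ) = (V * Dμ * Vᴴ) * (U σ)ᴴ := by
        have h2 := congrArg (fun X => V * X * Vᴴ) hKD
        calc (U σ)ᴴ * (V * Dμ * Vᴴ)
            = V * ((Vᴴ * ((U σ)ᴴ * V)) * Dμ) * Vᴴ := by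
              conv_rhs => rw [show V * ((Vᴴ * ((U σ)ᴴ * V)) * Dμ) * Vᴴ
                = (V * Vᴴ) * ((U σ)ᴴ * (V * Dμ * Vᴴ)) from by
                  simp only [Matrix.mul_assoc]]
              rw [hVV, one_mul]
          _ = V * (Dμ * (Vᴴ * ((U σ)ᴴ * V))) * Vᴴ := h2
          _ = (V * Dμ * Vᴴ) * (U σ)ᴴ := by
              conv_lhs => rw [show V * (Dμ * (Vᴴ * ((U σ)ᴴ * V))) * Vᴴ
                = (V * Dμ * Vᴴ) * ((U σ)ᴴ * (V * Vᴴ)) from by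
                  simp only [Matrix.mul_assoc]]
              rw [hVV, mul_one]
      have huu : U σ * (U σ)ᴴ = 1 := by
        have := Matrix.mem_unitaryGroup_iff.mp (hUunit σ)
        rwa [Matrix.star_eq_conjTranspose] at this
      have huu' : (U σ)ᴴ * U σ = 1 := by
        have := Matrix.mem_unitaryGroup_iff'.mp (hUunit σ)
        rwa [Matrix.star_eq_conjTranspose] at this
      show U σ * tensorMat ρ ρ = tensorMat ρ ρ * U σ
      rw [hYV]
      calc U σ * (V * Dμ * Vᴴ)
          = U σ * ((V * Dμ * Vᴴ) * ((U σ)ᴴ * U σ)) := by rw [huu', mul_one]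
        _ = U σ * (((U σ)ᴴ * (V * Dμ * Vᴴ)) * U σ) := by
            conv_rhs => rw [h1]
            simp only [Matrix.mul_assoc]
        _ = (U σ * (U σ)ᴴ) * ((V * Dμ * Vᴴ) * U σ) := by simp only [Matrix.mul_assoc]
        _ = (V * Dμ * Vᴴ) * U σ := by rw [huu, one_mul]
    obtain ⟨c, hc⟩ := (hergodic (tensorMat ρ ρ)).mp hcommY
    have hYpq : ∀ p q : Fin n × Fin n,
        ρ p.1 q.1 * ρ p.2 q.2 = if p = q then c (e p.1 + e p.2) else 0 := by
      intro p q
      have h := congrArg (fun A : Matrix (Fin n × Fin n) (Fin n × Fin n) ℂ => A p q) hc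
      rw [sum_specProj2_apply] at h
      exact h
    have hoff : ∀ i k : Fin n, i ≠ k → ρ i k = 0 := by
      intro i k hik
      have h := hYpq (i, i) (k, i)
      rw [if_neg (by simp [hik])] at h
      exact (mul_eq_zero.mp h).resolve_right (hρjj i)
    have hdiagc : ∀ i j : Fin n, ρ i i * ρ j j = c (e i + e j) := by
      intro i j
      have h := hYpq (i, j) (i, j)
      rwa [if_pos rfl] at h
    refine ⟨fun E => if h : ∃ i, e i = E then ρ h.choose h.choose else 0, ?_, ?_, ?_⟩
    · ext a b'
      rw [sum_specProj1_apply]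
      by_cases h : a = b'
      · subst h
        rw [if_pos rfl, dif_pos ⟨a, rfl⟩]
        have hex : ∃ i, e i = e a := ⟨a, rfl⟩
        have h1 : ρ hex.choose hex.choose * ρ a a = c (e hex.choose + e a) := hdiagc _ _
        rw [hex.choose_spec] at h1
        have h2 : ρ a a * ρ a a = c (e a + e a) := hdiagc a a
        exact (mul_right_cancel₀ (hρjj a) (h1.trans h2.symm)).symm
      · rw [if_neg h]
        exact hoff a b' h
    · show ρ * _ = _ * ρ
      ext a b'
      rw [Matrix.mul_diagonal, Matrix.diagonal_mul]
      by_cases h : a = b'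
      · subst h; ring
      · rw [hoff a b' h]; ring
    · intro i j k l hsum
      have hlam : ∀ i : Fin n,
          (if h : ∃ i', e i' = e i then ρ h.choose h.choose else 0) = ρ i i := by
        intro i
        rw [dif_pos ⟨i, rfl⟩]
        have hex : ∃ i', e i' = e i := ⟨i, rfl⟩
        have h1 : ρ hex.choose hex.choose * ρ i i = c (e hex.choose + e i) := hdiagc _ _
        rw [hex.choose_spec] at h1
        have h2 : ρ i i * ρ i i = c (e i + e i) := hdiagc i i
        exact mul_right_cancel₀ (hρjj i) (h1.trans h2.symm)
      simp only [hlam]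
      rw [hdiagc, hdiagc, hsum]
  · -- backward direction
    rintro ⟨lam, hsum, hcomm, hmul⟩
    have hdiag : ∀ a b : Fin n, ρ a b = if a = b then lam (e a) else 0 := by
      intro a b
      rw [hsum]
      exact sum_specProj1_apply e lam a b
    set c : ℝ → ℂ := fun E =>
      if h : ∃ p : Fin n × Fin n, e p.1 + e p.2 = E
      then lam (e h.choose.1) * lam (e h.choose.2) else 0 with hcdef
    have hcval : ∀ p : Fin n × Fin n, c (e p.1 + e p.2) = lam (e p.1) * lam (e p.2) := by
      intro p
      have hex : ∃ r : Fin n × Fin n, e r.1 + e r.2 = e p.1 + e p.2 := ⟨p, rfl⟩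
      rw [hcdef]
      simp only
      rw [dif_pos hex]
      exact hmul _ _ _ _ hex.choose_spec
    have hY : tensorMat ρ ρ = ∑ E ∈ Finset.univ.image
        (fun p : Fin n × Fin n => e p.1 + e p.2), c E • specProj2 e E := by
      ext p q
      rw [sum_specProj2_apply, tensorMat_apply, hdiag p.1 q.1, hdiag p.2 q.2]
      by_cases h1 : p = q
      · subst h1
        rw [if_pos rfl, if_pos rfl, if_pos rfl, hcval p]
      · rw [if_neg h1]
        by_cases h2 : p.1 = q.1
        · have h3 : ¬ p.2 = q.2 := fun h3 => h1 (Prod.ext h2 h3)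
          rw [if_neg h3, mul_zero]
        · rw [if_neg h2, zero_mul]
    have hcomm2 : ∀ σ, Commute (U σ) (tensorMat ρ ρ) := (hergodic _).mpr ⟨c, hY⟩
    have hconj : ∀ σ, U σ * tensorMat ρ ρ * (U σ)ᴴ = tensorMat ρ ρ := by
      intro σ
      have h := (hcomm2 σ).eq
      have hu : U σ * (U σ)ᴴ = 1 := by
        have := Matrix.mem_unitaryGroup_iff.mp (hUunit σ)
        rwa [Matrix.star_eq_conjTranspose] at this
      rw [h, Matrix.mul_assoc, hu, mul_one]
    have hQ : Qop ν U (tensorMat ρ ρ) = tensorMat ρ ρ := by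
      unfold Qop
      simp only [hconj]
      rw [integral_const]
      simp
    show ptrace2 (Qop ν U (tensorMat ρ ρ)) = ρ
    rw [hQ, ptrace2_tensorMat, hρtr, one_smul]
end

section
/- Let ρ_∞ be a strictly positive density matrix on finite-dimensional H such that ρ_∞ ⊗ ρ_∞ commutes with every U(σ). Then for every density matrix ρ, Tr[log(ρ_∞) · (ρ ⋆ ρ)] = Tr[log(ρ_∞) · ρ]; i.e., log(ρ_∞) is a collision invariant. -/
open Matrix MeasureTheory
open scoped Matrix.Norms.L2Operator ComplexOrder

section Aux

open Polynomial
open scoped Kronecker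

private lemma conjpow_aux {m : Type*} [Fintype m] [DecidableEq m] {W X : Matrix m m ℂ}
    (h1 : W * star W = 1) (h2 : star W * W = 1) (k : ℕ) :
    (W * X * star W) ^ k = W * X ^ k * star W := by
  induction k with
  | zero => simp [h1]
  | succ k ih =>
    rw [pow_succ, ih, pow_succ]
    have e : W * X ^ k * star W * (W * X * star W)
        = W * X ^ k * (star W * W) * (X * star W) := by
      simp only [mul_assoc]
    rw [e, h2, mul_one]
    simp only [mul_assoc]

private lemma aeval_conj_aux {m : Type*} [Fintype m] [DecidableEq m] {W : Matrix m m ℂ}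
    (h1 : W * star W = 1) (h2 : star W * W = 1)
    (X : Matrix m m ℂ) (p : ℂ[X]) :
    aeval (W * X * star W) p = W * aeval X p * star W := by
  rw [aeval_eq_sum_range, aeval_eq_sum_range, Finset.mul_sum, Finset.sum_mul]
  refine Finset.sum_congr rfl fun i _ => ?_
  rw [conjpow_aux h1 h2, mul_smul_comm, smul_mul_assoc]

private lemma aeval_diagonal_aux {m : Type*} [Fintype m] [DecidableEq m]
    (v : m → ℂ) (p : ℂ[X]) :
    aeval (Matrix.diagonal v) p = Matrix.diagonal (fun i => p.eval (v i)) := by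
  have h := aeval_algHom_apply (Matrix.diagonalAlgHom (n := m) (α := ℂ) ℂ) v p
  simp only [Matrix.diagonalAlgHom_apply] at h
  have h3 : (aeval v p) = fun i => p.eval (v i) := by
    funext i
    have h2 := aeval_algHom_apply (Pi.evalAlgHom ℂ (fun _ : m => ℂ) i) v p
    simp only [Pi.evalAlgHom_apply] at h2
    rw [← h2, ← coe_aeval_eq_eval]
  rw [h, h3]

/-- If `A` commutes with `exp M` for Hermitian `M`, then `A` commutes with `M`. -/
private lemma commute_of_commute_exp {m : Type*} [Fintype m] [DecidableEq m]
    {A M : Matrix m m ℂ}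
    (hM : M.IsHermitian) (h : Commute A (NormedSpace.exp M)) : Commute A M := by
  classical
  set W : Matrix m m ℂ := (hM.eigenvectorUnitary : Matrix m m ℂ) with hWdef
  have hWu : W ∈ Matrix.unitaryGroup m ℂ := hM.eigenvectorUnitary.2
  have h1 : W * star W = 1 := (Matrix.mem_unitaryGroup_iff).mp hWu
  have h2 : star W * W = 1 := (Matrix.mem_unitaryGroup_iff').mp hWu
  have hWunit : IsUnit W := ⟨⟨W, star W, h1, h2⟩, rfl⟩
  have hinv : W⁻¹ = star W := Matrix.inv_eq_right_inv h1
  set d : m → ℝ := hM.eigenvalues with hddef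
  have hspec : M = W * Matrix.diagonal ((↑) ∘ d) * star W := hM.spectral_theorem
  have hexp : NormedSpace.exp M
      = W * Matrix.diagonal (fun i => Complex.exp (d i)) * star W := by
    rw [hspec, ← hinv, Matrix.exp_conj W _ hWunit, Matrix.exp_diagonal, Pi.exp_def]
    congr 2
    funext i
    rw [← Complex.exp_eq_exp_ℂ]
    rfl
  set s : Finset ℝ := Finset.image d Finset.univ with hsdef
  have hinj : Set.InjOn (fun x : ℝ => ((Real.exp x : ℝ) : ℂ)) s := by
    intro a _ b _ hab
    simp only [Complex.ofReal_inj] at hab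
    exact Real.exp_injective hab
  set p : ℂ[X] := Lagrange.interpolate s (fun x : ℝ => ((Real.exp x : ℝ) : ℂ))
      (fun x : ℝ => (x : ℂ)) with hpdef
  have heval : ∀ i, p.eval (Complex.exp (d i)) = (d i : ℂ) := by
    intro i
    have hmem : d i ∈ s := Finset.mem_image_of_mem _ (Finset.mem_univ i)
    have := Lagrange.eval_interpolate_at_node (fun x : ℝ => (x : ℂ)) hinj hmem
    rw [← Complex.ofReal_exp]
    exact this
  have hPexp : aeval (NormedSpace.exp M) p = M := by
    rw [hexp, aeval_conj_aux h1 h2, aeval_diagonal_aux]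
    rw [congrArg Matrix.diagonal (funext fun i => heval i :
      (fun i => p.eval (Complex.exp ↑(d i))) = ((↑) ∘ d))]
    exact hspec.symm
  rw [← hPexp, aeval_eq_sum_range]
  exact Commute.sum_right _ _ _ fun i _ => (h.pow_right i).smul_right _

lemma tensorMat_eq_kronecker {n : ℕ} (A B : Matrix (Fin n) (Fin n) ℂ) :
    tensorMat A B = A ⊗ₖ B := rfl

/-- `A ↦ A ⊗ₖ 1` as an algebra hom. -/
noncomputable def kronRight {n : ℕ} : Matrix (Fin n) (Fin n) ℂ →ₐ[ℂ]
    Matrix (Fin n × Fin n) (Fin n × Fin n) ℂ where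
  toFun A := A ⊗ₖ (1 : Matrix (Fin n) (Fin n) ℂ)
  map_one' := Matrix.one_kronecker_one
  map_mul' A B := by rw [← Matrix.mul_kronecker_mul, mul_one]
  map_zero' := Matrix.zero_kronecker _
  map_add' A B := Matrix.add_kronecker _ _ _
  commutes' r := by
    simp only [Algebra.algebraMap_eq_smul_one, Matrix.smul_kronecker, Matrix.one_kronecker_one]

/-- `A ↦ 1 ⊗ₖ A` as an algebra hom. -/
noncomputable def kronLeft {n : ℕ} : Matrix (Fin n) (Fin n) ℂ →ₐ[ℂ]
    Matrix (Fin n × Fin n) (Fin n × Fin n) ℂ where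
  toFun A := (1 : Matrix (Fin n) (Fin n) ℂ) ⊗ₖ A
  map_one' := Matrix.one_kronecker_one
  map_mul' A B := by rw [← Matrix.mul_kronecker_mul, mul_one]
  map_zero' := Matrix.kronecker_zero _
  map_add' A B := Matrix.kronecker_add _ _ _
  commutes' r := by
    simp only [Algebra.algebraMap_eq_smul_one, Matrix.kronecker_smul, Matrix.one_kronecker_one]

lemma exp_tensor_sum {n : ℕ} (A : Matrix (Fin n) (Fin n) ℂ) :
    NormedSpace.exp (tensorMat A 1 + tensorMat 1 A)
      = tensorMat (NormedSpace.exp A) (NormedSpace.exp A) := by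
  have hcomm : Commute (tensorMat A 1) (tensorMat 1 A) := by
    simp only [tensorMat_eq_kronecker, Commute, SemiconjBy, ← Matrix.mul_kronecker_mul,
      mul_one, one_mul]
  have hR : NormedSpace.exp (A ⊗ₖ (1 : Matrix (Fin n) (Fin n) ℂ))
      = NormedSpace.exp A ⊗ₖ (1 : Matrix (Fin n) (Fin n) ℂ) :=
    (open scoped Matrix.Norms.Operator in NormedSpace.map_exp (kronRight (n := n))
      (LinearMap.continuous_of_finiteDimensional (kronRight (n := n)).toLinearMap) A).symm
  have hL : NormedSpace.exp ((1 : Matrix (Fin n) (Fin n) ℂ) ⊗ₖ A)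
      = (1 : Matrix (Fin n) (Fin n) ℂ) ⊗ₖ NormedSpace.exp A :=
    (open scoped Matrix.Norms.Operator in NormedSpace.map_exp (kronLeft (n := n))
      (LinearMap.continuous_of_finiteDimensional (kronLeft (n := n)).toLinearMap) A).symm
  rw [Matrix.exp_add_of_commute _ _ hcomm]
  simp only [tensorMat_eq_kronecker, hR, hL, ← Matrix.mul_kronecker_mul, mul_one, one_mul]

lemma swapMat_apply' {n : ℕ} (p q : Fin n × Fin n) :
    swapMat p q = if q = (p.2, p.1) then (1 : ℂ) else 0 := by
  simp only [swapMat, Matrix.of_apply, Prod.ext_iff]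
  by_cases h : p.1 = q.2 ∧ p.2 = q.1
  · rw [if_pos h, if_pos ⟨h.2.symm, h.1.symm⟩]
  · rw [if_neg h, if_neg (fun hc => h ⟨hc.2.symm, hc.1.symm⟩)]

lemma swapMat_apply'' {n : ℕ} (p q : Fin n × Fin n) :
    swapMat p q = if p = (q.2, q.1) then (1 : ℂ) else 0 := by
  simp [swapMat, Prod.ext_iff]

lemma swapMat_conjTranspose {n : ℕ} : (swapMat (n := n))ᴴ = swapMat := by
  ext p q
  rw [Matrix.conjTranspose_apply, swapMat_apply'' (n := n) q p, swapMat_apply']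
  split <;> simp

lemma swap_mul_apply {n : ℕ} (X : Matrix (Fin n × Fin n) (Fin n × Fin n) ℂ)
    (p q : Fin n × Fin n) : (swapMat (n := n) * X) p q = X (p.2, p.1) q := by
  rw [Matrix.mul_apply]
  simp only [swapMat_apply', ite_mul, one_mul, zero_mul]
  rw [Finset.sum_eq_single ((p.2, p.1) : Fin n × Fin n)]
  · simp
  · intro b _ hb; simp [hb]
  · simp

lemma mul_swap_apply {n : ℕ} (X : Matrix (Fin n × Fin n) (Fin n × Fin n) ℂ)
    (p q : Fin n × Fin n) : (X * swapMat (n := n)) p q = X p (q.2, q.1) := by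
  rw [Matrix.mul_apply]
  simp only [swapMat_apply'', mul_ite, mul_one, mul_zero]
  rw [Finset.sum_eq_single ((q.2, q.1) : Fin n × Fin n)]
  · simp
  · intro b _ hb; simp [hb]
  · simp

lemma swap_conj {n : ℕ} (A B : Matrix (Fin n) (Fin n) ℂ) :
    swapMat * tensorMat A B * swapMatᴴ = tensorMat B A := by
  rw [swapMat_conjTranspose]
  ext p q
  rw [mul_swap_apply, swap_mul_apply]
  simp [tensorMat, mul_comm]

lemma trace_mul_ptrace2 {n : ℕ} (L : Matrix (Fin n) (Fin n) ℂ)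
    (X : Matrix (Fin n × Fin n) (Fin n × Fin n) ℂ) :
    (L * ptrace2 X).trace = (tensorMat L 1 * X).trace := by
  simp only [Matrix.trace, Matrix.diag, Matrix.mul_apply, ptrace2, tensorMat,
    Matrix.of_apply, Fintype.sum_prod_type, Matrix.one_apply, mul_ite, mul_one, mul_zero,
    ite_mul, zero_mul, Finset.mul_sum, Finset.sum_ite_eq, Finset.mem_univ, if_true]
  exact Finset.sum_congr rfl fun a _ => Finset.sum_comm

lemma trace_tensor {n : ℕ} (A B : Matrix (Fin n) (Fin n) ℂ) :
    (tensorMat A B).trace = A.trace * B.trace := Matrix.trace_kronecker A B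

lemma tensor_mul_tensor {n : ℕ} (A B C D : Matrix (Fin n) (Fin n) ℂ) :
    tensorMat A B * tensorMat C D = tensorMat (A * C) (B * D) :=
  (Matrix.mul_kronecker_mul A C B D).symm

lemma tensor_conjTranspose {n : ℕ} (A B : Matrix (Fin n) (Fin n) ℂ) :
    (tensorMat A B)ᴴ = tensorMat Aᴴ Bᴴ := by
  ext p q
  simp [tensorMat, Matrix.conjTranspose_apply, mul_comm]

end Aux

/-- **Collision invariance of `log ρ_∞`**: if `ρ_∞` is a strictly positive density matrix
with `ρ_∞ ⊗ ρ_∞` commuting with every `U(σ)`, then for every density matrix `ρ`,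
`Tr[log(ρ_∞)·(ρ ⋆ ρ)] = Tr[log(ρ_∞)·ρ]`. Here `L = log ρ_∞` is the Hermitian matrix
with `exp L = ρ_∞`. -/
theorem log_steady_state_is_collision_invariant {C : Type*} [MetricSpace C]
    [CompactSpace C] [MeasurableSpace C] [BorelSpace C] {n : ℕ}
    (ν : Measure C) [IsProbabilityMeasure ν]
    (U : C → Matrix (Fin n × Fin n) (Fin n × Fin n) ℂ)
    (hUcont : Continuous U)
    (hUunit : ∀ σ, U σ ∈ Matrix.unitaryGroup (Fin n × Fin n) ℂ)
    (hswap : ∀ X : Matrix (Fin n × Fin n) (Fin n × Fin n) ℂ,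
      Qop ν U (swapMat * X * swapMatᴴ) = swapMat * Qop ν U X * swapMatᴴ)
    (hQsa : ∀ X Y : Matrix (Fin n × Fin n) (Fin n × Fin n) ℂ,
      ((Qop ν U X)ᴴ * Y).trace = (Xᴴ * Qop ν U Y).trace)
    (ρinf : Matrix (Fin n) (Fin n) ℂ) (hρinfpos : ρinf.PosDef) (hρinftr : ρinf.trace = 1)
    (hρinfcomm : ∀ σ, Commute (U σ) (tensorMat ρinf ρinf))
    (L : Matrix (Fin n) (Fin n) ℂ) (hL : L.IsHermitian)
    (hexpL : NormedSpace.exp L = ρinf)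
    (ρ : Matrix (Fin n) (Fin n) ℂ) (hρ : ρ.PosSemidef) (hρtr : ρ.trace = 1) :
    (L * wildConv ν U ρ ρ).trace = (L * ρ).trace := by
  classical
  set Y : Matrix (Fin n × Fin n) (Fin n × Fin n) ℂ := tensorMat ρ ρ with hYdef
  set Xq : Matrix (Fin n × Fin n) (Fin n × Fin n) ℂ := Qop ν U Y with hXdef
  set Mb : Matrix (Fin n × Fin n) (Fin n × Fin n) ℂ := tensorMat L 1 + tensorMat 1 L with hMbdef
  clear_value Y Xq Mb
  -- `Mb` is Hermitian
  have hMbherm : Mb.IsHermitian := by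
    show Mbᴴ = Mb
    rw [hMbdef, Matrix.conjTranspose_add, tensor_conjTranspose, tensor_conjTranspose,
      Matrix.conjTranspose_one, hL.eq]
  -- `exp Mb = ρ∞ ⊗ ρ∞`
  have hexpMb : NormedSpace.exp Mb = tensorMat ρinf ρinf := by
    rw [hMbdef, exp_tensor_sum, hexpL]
  -- every `U σ` commutes with `Mb`
  have hcomm : ∀ σ, Commute (U σ) Mb := fun σ =>
    commute_of_commute_exp hMbherm (by rw [hexpMb]; exact hρinfcomm σ)
  -- `Q` fixes `Mb`
  have hQMb : Qop ν U Mb = Mb := by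
    rw [Qop]
    have hconst : (fun σ => U σ * Mb * (U σ)ᴴ) = fun _ => Mb := by
      funext σ
      rw [← Matrix.star_eq_conjTranspose, hcomm σ, mul_assoc,
        (Matrix.mem_unitaryGroup_iff).mp (hUunit σ), mul_one]
    rw [hconst, integral_const, probReal_univ]
    simp
  -- reduce LHS to a trace on the doubled space
  have h1 : (L * wildConv ν U ρ ρ).trace = (tensorMat L 1 * Xq).trace := by
    rw [hXdef, hYdef]
    exact trace_mul_ptrace2 L (Qop ν U (tensorMat ρ ρ))
  -- swap invariance of `Xq`
  have hXfix : swapMat * Xq * swapMatᴴ = Xq := by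
    rw [hXdef, ← hswap, hYdef, swap_conj]
  -- the two halves of the trace agree
  have h3 : (tensorMat 1 L * Xq).trace = (tensorMat L 1 * Xq).trace := by
    have hSLS : swapMat * tensorMat 1 L * swapMat = tensorMat L 1 := by
      have := swap_conj (n := n) 1 L
      rwa [swapMat_conjTranspose] at this
    calc (tensorMat 1 L * Xq).trace
        = (tensorMat 1 L * (swapMat * Xq * swapMat)).trace := by
          have hXfix' := hXfix
          rw [swapMat_conjTranspose] at hXfix'
          rw [hXfix']
      _ = ((tensorMat 1 L * swapMat) * Xq * swapMat).trace := by
          simp only [mul_assoc]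
      _ = (swapMat * (tensorMat 1 L * swapMat) * Xq).trace := by
          rw [Matrix.trace_mul_cycle]
      _ = ((swapMat * tensorMat 1 L * swapMat) * Xq).trace := by
          simp only [mul_assoc]
      _ = (tensorMat L 1 * Xq).trace := by rw [hSLS]
  -- self-adjointness of `Q` applied to `Mb` and `Y`
  have h4 : (Mb * Y).trace = (Mb * Xq).trace := by
    have := hQsa Mb Y
    rwa [hQMb, hMbherm.eq, ← hXdef] at this
  -- compute both sides of `h4`
  have hlhs : (Mb * Y).trace = 2 * (L * ρ).trace := by
    rw [hMbdef, hYdef, Matrix.add_mul, Matrix.trace_add, tensor_mul_tensor,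
      tensor_mul_tensor, one_mul, trace_tensor, trace_tensor, hρtr]
    ring
  have hrhs : (Mb * Xq).trace = 2 * (tensorMat L 1 * Xq).trace := by
    rw [hMbdef, Matrix.add_mul, Matrix.trace_add, h3]
    ring
  have key : (2 : ℂ) * (tensorMat L 1 * Xq).trace = 2 * (L * ρ).trace := by
    rw [← hrhs, ← h4, hlhs]
  rw [h1, mul_left_cancel₀ (two_ne_zero) key]
end
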